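/- For every positive integer n and every 0 ≤ i ≤ n-1, the h*-vector of the polynomial (k+1)^n − k^n (which has degree n−1) satisfies h*_i((k+1)^n − k^n) = A(n, i+1), where A(n,i) is the Eulerian number. -/

import Mathlib

open Finset

/-- Eulerian number `A(n,i) = Σ_{j=0}^{i} (-1)^j C(n+1,j) (i-j)^n`. -/
def eulerianA (n i : ℕ) : ℤ :=
  ∑ j ∈ Finset.range (i + 1), (-1 : ℤ) ^ j * ((n + 1).choose j : ℤ) * ((i - j : ℕ) : ℤ) ^ n

/-- Truncated binomial coefficient as a function on `ℤ`. -/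
def cg (r : ℕ) (a : ℤ) : ℤ := if 0 ≤ a then (a.toNat.choose r : ℤ) else 0

/-- Truncated power function on `ℤ`. -/
def pZ (n : ℕ) (a : ℤ) : ℤ := (a.toNat : ℤ) ^ n

lemma alt_sum (m : ℕ) (f : ℤ → ℤ) (N : ℤ) :
    ∑ j ∈ range (m + 1), (-1 : ℤ) ^ j * (m.choose j : ℤ) * f (N - j) =
      (fwdDiff (1:ℤ))^[m] f (N - m) := by
  rw [fwdDiff_iter_eq_sum_shift, ← Finset.sum_range_reflect]
  refine Finset.sum_congr rfl fun j hj => ?_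
  simp only [Finset.mem_range] at hj
  have hjm : j ≤ m := by omega
  have h1 : m + 1 - 1 - j = m - j := by omega
  rw [h1, Nat.choose_symm hjm, smul_eq_mul]
  have h3 : ((m - j : ℕ) : ℤ) = (m : ℤ) - j := by omega
  have h4 : N - ((m:ℤ) - j) = N - m + j • (1:ℤ) := by simp; ring
  rw [h3, h4]

lemma iter_agree (t : ℕ) (f g : ℤ → ℤ) (y : ℤ) (h : ∀ x, y ≤ x → f x = g x) :
    (fwdDiff (1:ℤ))^[t] f y = (fwdDiff (1:ℤ))^[t] g y := by
  rw [fwdDiff_iter_eq_sum_shift, fwdDiff_iter_eq_sum_shift]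
  refine Finset.sum_congr rfl fun j _ => ?_
  rw [h (y + j • (1:ℤ)) (by simp)]

lemma iter_zero_fn (t : ℕ) (y : ℤ) : (fwdDiff (1:ℤ))^[t] (fun _ => (0:ℤ)) y = 0 := by
  induction t generalizing y with
  | zero => simp
  | succ t ih =>
    rw [Function.iterate_succ_apply]
    have : fwdDiff (1:ℤ) (fun _ => (0:ℤ)) = fun _ => (0:ℤ) := by
      funext a; simp [fwdDiff]
    rw [this, ih]

lemma iter_vanish (t : ℕ) (f : ℤ → ℤ) (y : ℤ) (h : ∀ x, y ≤ x → f x = 0) :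
    (fwdDiff (1:ℤ))^[t] f y = 0 := by
  rw [iter_agree t f (fun _ => 0) y h, iter_zero_fn]

lemma pZ_vanish : ∀ n : ℕ, ∀ y : ℤ, 0 ≤ y → (fwdDiff (1:ℤ))^[n + 1] (pZ n) y = 0 := by
  intro n
  induction n using Nat.strong_induction_on with
  | _ n IH =>
    intro y hy
    rw [Function.iterate_succ_apply]
    have hstep : ∀ x : ℤ, y ≤ x →
        fwdDiff (1:ℤ) (pZ n) x = (∑ r ∈ range n, (fun a => (n.choose r : ℤ) * pZ r a)) x := by
      intro x hx
      have hx0 : 0 ≤ x := le_trans hy hx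
      have hb : ((x + 1).toNat : ℤ) = (x.toNat : ℤ) + 1 := by omega
      have hbin : ∀ b : ℤ, (b+1)^n - b^n = ∑ r ∈ range n, (n.choose r : ℤ) * b^r := by
        intro b; rw [add_pow, Finset.sum_range_succ]; simp [mul_comm]
      simp only [fwdDiff, pZ, Finset.sum_apply, hb]
      rw [hbin]
    rw [iter_agree n _ _ y hstep, fwdDiff_iter_finset_sum, Finset.sum_apply]
    refine Finset.sum_eq_zero fun r hr => ?_
    simp only [Finset.mem_range] at hr
    have hco : (fun a => (n.choose r : ℤ) * pZ r a) = (n.choose r : ℤ) • pZ r := by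
      funext a; simp [smul_eq_mul]
    rw [hco, fwdDiff_iter_const_smul]
    have hn : n = (n - (r + 1)) + (r + 1) := by omega
    rw [Pi.smul_apply, smul_eq_mul]
    rw [hn, Function.iterate_add_apply]
    rw [iter_vanish _ _ y (fun x hx => IH r hr x (le_trans hy hx)), mul_zero]

lemma fwdDiff_cg (s : ℕ) : fwdDiff (1:ℤ) (cg (s+1)) = cg s := by
  funext a
  simp only [fwdDiff, cg]
  rcases lt_trichotomy a (-1) with h | h | h
  · rw [if_neg (by omega), if_neg (by omega), if_neg (by omega)]; ring
  · subst h; norm_num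
  · have ha : 0 ≤ a := by omega
    rw [if_pos (by omega), if_pos ha, if_pos ha]
    have h1 : (a+1).toNat = a.toNat + 1 := by omega
    rw [h1, Nat.choose_succ_succ']
    push_cast; ring

lemma iter_cg (r : ℕ) : (fwdDiff (1:ℤ))^[r] (cg r) = cg 0 := by
  induction r with
  | zero => rfl
  | succ r ih => rw [Function.iterate_succ_apply, fwdDiff_cg, ih]

lemma delta_cg (r : ℕ) (y : ℤ) :
    (fwdDiff (1:ℤ))^[r + 2] (cg r) y =
      (if y = -2 then 1 else 0) - (if y = -1 then 1 else 0) := by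
  have h1 : r + 2 = 2 + r := by omega
  rw [h1, Function.iterate_add_apply, iter_cg]
  have hc0 : fwdDiff (1:ℤ) (cg 0) = fun a => if a = -1 then 1 else 0 := by
    funext a
    simp only [fwdDiff, cg, Nat.choose_zero_right, Nat.cast_one]
    split_ifs <;> omega
  show fwdDiff (1:ℤ) (fwdDiff (1:ℤ) (cg 0)) y = _
  rw [hc0]
  simp only [fwdDiff]
  split_ifs <;> omega

lemma eulerian_fixed (n : ℕ) (hn : 1 ≤ n) (i : ℕ) :
    eulerianA n i = ∑ j ∈ range (n+2), (-1:ℤ)^j * ((n+1).choose j : ℤ) * pZ n ((i:ℤ) - j) := by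
  have hterm : ∀ j ∈ range (i+1), (-1:ℤ)^j * ((n+1).choose j : ℤ) * ((i - j : ℕ):ℤ)^n
      = (-1:ℤ)^j * ((n+1).choose j : ℤ) * pZ n ((i:ℤ) - j) := by
    intro j _
    have : ((i - j : ℕ):ℤ) = (((i:ℤ) - j).toNat : ℤ) := by omega
    rw [pZ, ← this]
  rw [eulerianA, Finset.sum_congr rfl hterm]
  have hA : ∑ j ∈ range (i+1), (-1:ℤ)^j * ((n+1).choose j : ℤ) * pZ n ((i:ℤ) - j)
      = ∑ j ∈ range (i+n+3), (-1:ℤ)^j * ((n+1).choose j : ℤ) * pZ n ((i:ℤ) - j) := by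
    apply Finset.sum_subset (by intro x hx; simp at *; omega)
    intro j _ hj
    simp only [Finset.mem_range, not_lt] at hj
    have : ((i:ℤ) - j).toNat = 0 := by omega
    rw [pZ, this, Nat.cast_zero, zero_pow (by omega), mul_zero]
  have hB : ∑ j ∈ range (n+2), (-1:ℤ)^j * ((n+1).choose j : ℤ) * pZ n ((i:ℤ) - j)
      = ∑ j ∈ range (i+n+3), (-1:ℤ)^j * ((n+1).choose j : ℤ) * pZ n ((i:ℤ) - j) := by
    apply Finset.sum_subset (by intro x hx; simp at *; omega)
    intro j _ hj
    simp only [Finset.mem_range, not_lt] at hj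
    rw [Nat.choose_eq_zero_of_lt (by omega), Nat.cast_zero, mul_zero, zero_mul]
  rw [hA, ← hB]

lemma eulerian_vanish (n i : ℕ) (hn : 1 ≤ n) (hi : n + 1 ≤ i) : eulerianA n i = 0 := by
  rw [eulerian_fixed n hn i]
  have h2 : n + 2 = (n + 1) + 1 := rfl
  rw [h2, alt_sum (n+1) (pZ n) (i:ℤ)]
  exact pZ_vanish n _ (by push_cast; omega)

lemma inner_reindex (r k j : ℕ) (hj : j ≤ r + 2) :
    ∑ i ∈ range (k + r + 3), pZ (r+1) ((i:ℤ) + 1 - j) * cg r ((k:ℤ) + r - i) =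
    ∑ t ∈ range (k + r + 3), pZ (r+1) ((t:ℤ) + 1) * cg r ((k:ℤ) + r - j - t) := by
  set I := k + r + 3 with hI
  set F : ℕ → ℤ := fun i => pZ (r+1) ((i:ℤ) + 1 - j) * cg r ((k:ℤ) + r - i) with hF
  have h1 : ∑ i ∈ range I, F i = ∑ i ∈ range (j + I), F i := by
    apply Finset.sum_subset (by intro x hx; simp at *; omega)
    intro i _ hi
    simp only [Finset.mem_range, not_lt] at hi
    have : ¬ (0:ℤ) ≤ (k:ℤ) + r - i := by omega
    rw [hF]; simp only [cg, if_neg this, mul_zero]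
  have h2 : ∑ i ∈ range j, F i = 0 := by
    refine Finset.sum_eq_zero fun i hi => ?_
    simp only [Finset.mem_range] at hi
    have : ((i:ℤ) + 1 - j).toNat = 0 := by omega
    rw [hF]; simp only [pZ, this, Nat.cast_zero, zero_pow (by omega : r + 1 ≠ 0), zero_mul]
  have h3 : ∑ i ∈ range (j + I), F i = ∑ i ∈ range j, F i + ∑ i ∈ Finset.Ico j (j + I), F i := by
    rw [Finset.range_eq_Ico, ← Finset.sum_Ico_consecutive F (Nat.zero_le j) (by omega), Finset.range_eq_Ico]
  have h4 : ∑ i ∈ Finset.Ico j (j + I), F i = ∑ t ∈ range I, F (j + t) := by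
    rw [Finset.sum_Ico_eq_sum_range]
    simp
  rw [h1, h3, h2, zero_add, h4]
  refine Finset.sum_congr rfl fun t _ => ?_
  show pZ (r+1) (((j + t : ℕ):ℤ) + 1 - j) * cg r ((k:ℤ) + r - ((j + t : ℕ):ℤ)) = _
  have e1 : ((j + t : ℕ):ℤ) + 1 - j = (t:ℤ) + 1 := by push_cast; ring
  have e2 : (k:ℤ) + r - ((j + t : ℕ):ℤ) = (k:ℤ) + r - j - t := by push_cast; ring
  rw [e1, e2]

theorem hstar_succ_pow_sub_pow (n : ℕ) (hn : 1 ≤ n) (k : ℕ) :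
    ((k : ℤ) + 1) ^ n - (k : ℤ) ^ n =
      ∑ i ∈ Finset.range n, eulerianA n (i + 1) * ((k + (n - 1) - i).choose (n - 1) : ℤ) := by
  obtain ⟨r, rfl⟩ : ∃ r, n = r + 1 := ⟨n - 1, by omega⟩
  simp only [Nat.add_sub_cancel]
  set I := k + r + 3 with hI
  symm
  calc
    ∑ i ∈ range (r+1), eulerianA (r+1) (i + 1) * ((k + r - i).choose r : ℤ)
        = ∑ i ∈ range (r+1), eulerianA (r+1) (i + 1) * cg r ((k:ℤ) + r - i) := by
          refine Finset.sum_congr rfl fun i hi => ?_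
          simp only [Finset.mem_range] at hi
          have harg : ((k:ℤ) + r - i).toNat = k + r - i := by omega
          rw [cg, if_pos (by omega : (0:ℤ) ≤ (k:ℤ) + r - i), harg]
    _ = ∑ i ∈ range I, eulerianA (r+1) (i + 1) * cg r ((k:ℤ) + r - i) := by
          apply Finset.sum_subset (by intro x hx; simp at *; omega)
          intro i _ hi
          simp only [Finset.mem_range, not_lt] at hi
          rw [eulerian_vanish (r+1) (i+1) (by omega) (by omega), zero_mul]
    _ = ∑ i ∈ range I, ∑ j ∈ range (r+3),
          (-1:ℤ)^j * ((r+2).choose j : ℤ) * (pZ (r+1) ((i:ℤ) + 1 - j) * cg r ((k:ℤ) + r - i)) := by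
          refine Finset.sum_congr rfl fun i _ => ?_
          rw [eulerian_fixed (r+1) (by omega) (i+1), Finset.sum_mul]
          refine Finset.sum_congr rfl fun j _ => ?_
          push_cast
          ring
    _ = ∑ j ∈ range (r+3), (-1:ℤ)^j * ((r+2).choose j : ℤ) *
          ∑ i ∈ range I, pZ (r+1) ((i:ℤ) + 1 - j) * cg r ((k:ℤ) + r - i) := by
          rw [Finset.sum_comm]
          refine Finset.sum_congr rfl fun j _ => ?_
          rw [Finset.mul_sum]
    _ = ∑ j ∈ range (r+3), (-1:ℤ)^j * ((r+2).choose j : ℤ) *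
          ∑ t ∈ range I, pZ (r+1) ((t:ℤ) + 1) * cg r ((k:ℤ) + r - j - t) := by
          refine Finset.sum_congr rfl fun j hj => ?_
          simp only [Finset.mem_range] at hj
          rw [inner_reindex r k j (by omega)]
    _ = ∑ t ∈ range I, pZ (r+1) ((t:ℤ) + 1) *
          ∑ j ∈ range (r+3), (-1:ℤ)^j * ((r+2).choose j : ℤ) * cg r (((k:ℤ) + r - t) - j) := by
          simp_rw [Finset.mul_sum]
          rw [Finset.sum_comm]
          refine Finset.sum_congr rfl fun t _ => Finset.sum_congr rfl fun j _ => ?_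
          have : (k:ℤ) + r - j - t = ((k:ℤ) + r - t) - j := by ring
          rw [this]; ring
    _ = ∑ t ∈ range I, pZ (r+1) ((t:ℤ) + 1) *
          ((if (k:ℤ) - t - 2 = -2 then 1 else 0) - (if (k:ℤ) - t - 2 = -1 then 1 else 0)) := by
          refine Finset.sum_congr rfl fun t _ => ?_
          congr 1
          have h2 : r + 3 = (r + 2) + 1 := rfl
          rw [h2, alt_sum (r+2) (cg r) ((k:ℤ) + r - t), delta_cg]
          have : (k:ℤ) + r - t - ((r+2:ℕ):ℤ) = (k:ℤ) - t - 2 := by push_cast; ring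
          rw [this]
    _ = ∑ t ∈ range I, ((if t = k then ((k:ℤ)+1)^(r+1) else 0)
          - (if t + 1 = k then (k:ℤ)^(r+1) else 0)) := by
          refine Finset.sum_congr rfl fun t _ => ?_
          rw [mul_sub]
          congr 1
          · by_cases h : t = k
            · rw [if_pos (by omega : (k:ℤ) - t - 2 = -2), if_pos h, mul_one, pZ]
              have hh : ((((t:ℤ)+1)).toNat : ℤ) = (k:ℤ) + 1 := by omega
              rw [hh]
            · rw [if_neg (by omega), if_neg h, mul_zero]
          · by_cases h : t + 1 = k
            · rw [if_pos (by omega), if_pos h, mul_one, pZ]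
              have hh : ((((t:ℤ)+1)).toNat : ℤ) = (k:ℤ) := by omega
              rw [hh]
            · rw [if_neg (by omega), if_neg h, mul_zero]
    _ = ((k : ℤ) + 1) ^ (r+1) - (k : ℤ) ^ (r+1) := by
          rw [Finset.sum_sub_distrib]
          congr 1
          · rw [Finset.sum_ite_eq' (range I) k (fun _ => ((k:ℤ)+1)^(r+1)),
              if_pos (by simp [hI]; omega)]
          · rcases k with _ | k'
            · rw [Finset.sum_eq_zero (fun t _ => if_neg (by omega))]
              simp [zero_pow]
            · have hcond : ∀ t, (t + 1 = k' + 1) = (t = k') := by intro t; simp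
              simp_rw [hcond]
              rw [Finset.sum_ite_eq' (range I) k' (fun _ => ((k'+1:ℕ):ℤ)^(r+1)),
                if_pos (by simp [hI]; omega)]
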